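/- Let m be a positive integer, u an integer with 0 ≤ u ≤ 2m − 1, and z = exp(πi/m). Then, as complex numbers, −(2/m)·( ∑_{k=1}^{2m−1} z^{ku}/(1 − z^{−k}) − ∑_{k=1}^{m−1} z^{2ku}/(1 − z^{−2k}) ) equals −1 if 0 ≤ u ≤ m − 1, and equals 1 if m ≤ u ≤ 2m − 1. -/

import Mathlib

open scoped BigOperators
open Finset

private lemma pair_eq_one (w : ℂ) (hw1 : w ≠ 1) (hw0 : w ≠ 0) :
    1 / (1 - w⁻¹) + 1 / (1 - w) = 1 := by
  have h1 : 1 - w ≠ 0 := sub_ne_zero.mpr (Ne.symm hw1)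
  have h2 : 1 - w⁻¹ ≠ 0 := by
    rw [sub_ne_zero]
    intro h
    exact hw1 (inv_eq_one.mp h.symm)
  have hrw : 1 - w⁻¹ = (w - 1) / w := by field_simp
  rw [hrw, one_div_div]
  rw [div_add_div _ _ (by intro h; apply h1; linear_combination -h) h1]
  rw [div_eq_one_iff_eq (mul_ne_zero (by intro h; apply h1; linear_combination -h) h1)]
  ring

private lemma half_sum (n : ℕ) (hn : 0 < n) (ζ : ℂ) (hζ : IsPrimitiveRoot ζ n) :
    ∑ k ∈ Ioo 0 n, (1 : ℂ) / (1 - ζ ^ (-(k : ℤ))) = ((n : ℂ) - 1) / 2 := by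
  have hζ0 : ζ ≠ 0 := hζ.ne_zero hn.ne'
  set S := ∑ k ∈ Ioo 0 n, (1 : ℂ) / (1 - ζ ^ (-(k : ℤ))) with hS
  have hrefl : S = ∑ k ∈ Ioo 0 n, (1 : ℂ) / (1 - ζ ^ (-((n - k : ℕ) : ℤ))) := by
    rw [hS]
    refine Finset.sum_nbij' (fun i => n - i) (fun i => n - i) ?_ ?_ ?_ ?_ ?_ <;>
        intro a ha <;> simp only [Finset.mem_Ioo] at * <;> try omega
    have h : n - (n - a) = a := by omega
    rw [h]
  have h2S : S + S = (n : ℂ) - 1 := by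
    nth_rewrite 2 [hrefl]
    rw [← Finset.sum_add_distrib]
    have key : ∀ k ∈ Ioo 0 n,
        (1 : ℂ) / (1 - ζ ^ (-(k : ℤ))) + 1 / (1 - ζ ^ (-((n - k : ℕ) : ℤ))) = 1 := by
      intro k hk
      simp only [Finset.mem_Ioo] at hk
      have hcast : ((n - k : ℕ) : ℤ) = (n : ℤ) - k := by omega
      have hzn : ζ ^ ((n : ℤ)) = 1 := by rw [zpow_natCast]; exact hζ.pow_eq_one
      have hrw2 : ζ ^ (-((n - k : ℕ) : ℤ)) = (ζ ^ (k : ℤ))⁻¹⁻¹ := by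
        rw [hcast, neg_sub, zpow_sub₀ hζ0, hzn, inv_inv]
        simp
      have hrw1 : ζ ^ (-(k : ℤ)) = (ζ ^ (k : ℤ))⁻¹ := by rw [zpow_neg]
      rw [hrw1, hrw2]
      have hw1 : (ζ ^ (k : ℤ))⁻¹ ≠ 1 := by
        rw [ne_eq, inv_eq_one, zpow_natCast]
        exact hζ.pow_ne_one_of_pos_of_lt hk.1.ne' hk.2
      have hw0 : (ζ ^ (k : ℤ))⁻¹ ≠ 0 := by
        simp [zpow_ne_zero, hζ0]
      rw [add_comm]
      exact pair_eq_one _ hw1 hw0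
    rw [Finset.sum_congr rfl key, Finset.sum_const, Nat.card_Ioo, nsmul_eq_mul, mul_one]
    have h1 : n - 0 - 1 = n - 1 := by omega
    rw [h1, Nat.cast_sub hn]
    simp
  have h2 : (2 : ℂ) ≠ 0 := two_ne_zero
  field_simp
  linear_combination h2S

private lemma geom_Ioo (n : ℕ) (hn : 0 < n) (ζ : ℂ) (hζ : IsPrimitiveRoot ζ n) (a : ℤ) :
    ∑ k ∈ Ioo 0 n, ζ ^ ((k : ℤ) * a) = if (n : ℤ) ∣ a then (n : ℂ) - 1 else -1 := by
  have hrw : ∀ k : ℕ, ζ ^ ((k : ℤ) * a) = (ζ ^ a) ^ k := by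
    intro k
    rw [mul_comm, zpow_mul, zpow_natCast]
  simp_rw [hrw]
  have hins : range n = insert 0 (Ioo 0 n) := by
    ext x; simp [Finset.mem_Ioo, Finset.mem_range]; omega
  by_cases hd : (n : ℤ) ∣ a
  · have h1 : ζ ^ a = 1 := (hζ.zpow_eq_one_iff_dvd a).mpr hd
    simp only [h1, one_pow, Finset.sum_const, Nat.card_Ioo, nsmul_eq_mul, mul_one, hd, if_true]
    have hc : n - 0 - 1 = n - 1 := by omega
    rw [hc, Nat.cast_sub hn]
    simp
  · have h1 : ζ ^ a ≠ 1 := fun h => hd ((hζ.zpow_eq_one_iff_dvd a).mp h)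
    have hpow : (ζ ^ a) ^ n = 1 := by
      rw [← zpow_natCast, ← zpow_mul, mul_comm, zpow_mul, zpow_natCast, hζ.pow_eq_one, one_zpow]
    have hsum : ∑ k ∈ range n, (ζ ^ a) ^ k = 0 := by
      rw [geom_sum_eq h1, hpow]
      simp
    rw [hins, Finset.sum_insert (by simp)] at hsum
    simp only [pow_zero] at hsum
    rw [if_neg hd]
    linear_combination hsum

private lemma T_step (n : ℕ) (ζ : ℂ) (hζ0 : ζ ≠ 0)
    (hne : ∀ k ∈ Ioo 0 n, (1 : ℂ) - ζ ^ (-(k : ℤ)) ≠ 0) (u : ℤ) :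
    ∑ k ∈ Ioo 0 n, ζ ^ ((k : ℤ) * (u + 1)) / (1 - ζ ^ (-(k : ℤ)))
      = (∑ k ∈ Ioo 0 n, ζ ^ ((k : ℤ) * u) / (1 - ζ ^ (-(k : ℤ))))
        + ∑ k ∈ Ioo 0 n, ζ ^ ((k : ℤ) * (u + 1)) := by
  rw [← Finset.sum_add_distrib]
  refine Finset.sum_congr rfl fun k hk => ?_
  have hd := hne k hk
  have h1 : ζ ^ ((k : ℤ) * (u + 1)) = ζ ^ ((k : ℤ) * u) * ζ ^ (k : ℤ) := by
    rw [← zpow_add₀ hζ0]; ring_nf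
  have h2 : ζ ^ (k : ℤ) * ζ ^ (-(k : ℤ)) = 1 := by
    rw [← zpow_add₀ hζ0]; simp
  have key : ζ ^ ((k : ℤ) * u) * ζ ^ (k : ℤ)
      = ζ ^ ((k : ℤ) * u) + ζ ^ ((k : ℤ) * u) * ζ ^ (k : ℤ) * (1 - ζ ^ (-(k : ℤ))) := by
    linear_combination ζ ^ ((k : ℤ) * u) * h2
  calc ζ ^ ((k : ℤ) * (u + 1)) / (1 - ζ ^ (-(k : ℤ)))
      = (ζ ^ ((k : ℤ) * u) + ζ ^ ((k : ℤ) * u) * ζ ^ (k : ℤ) * (1 - ζ ^ (-(k : ℤ))))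
          / (1 - ζ ^ (-(k : ℤ))) := by rw [h1, ← key]
    _ = ζ ^ ((k : ℤ) * u) / (1 - ζ ^ (-(k : ℤ))) + ζ ^ ((k : ℤ) * u) * ζ ^ (k : ℤ) := by
        rw [add_div, mul_div_assoc, div_self hd, mul_one]
    _ = ζ ^ ((k : ℤ) * u) / (1 - ζ ^ (-(k : ℤ))) + ζ ^ ((k : ℤ) * (u + 1)) := by rw [h1]

theorem sum_half_rootOfUnity_eval (m : ℕ) (hm : 0 < m) (u : ℤ)
    (hu0 : 0 ≤ u) (hu1 : u ≤ 2 * m - 1) :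
    -(2 / (m : ℂ)) *
        ((∑ k ∈ Finset.Ioo 0 (2 * m),
            Complex.exp (Real.pi * Complex.I / m) ^ ((k : ℤ) * u) /
              (1 - Complex.exp (Real.pi * Complex.I / m) ^ (-(k : ℤ))))
          - ∑ k ∈ Finset.Ioo 0 m,
              Complex.exp (Real.pi * Complex.I / m) ^ (2 * (k : ℤ) * u) /
                (1 - Complex.exp (Real.pi * Complex.I / m) ^ (-(2 * (k : ℤ)))))
      = if u ≤ (m : ℤ) - 1 then -1 else 1 := by
  have hm0 : (m : ℂ) ≠ 0 := Nat.cast_ne_zero.mpr hm.ne'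
  set z : ℂ := Complex.exp (Real.pi * Complex.I / m) with hzdef
  have hzp : IsPrimitiveRoot z (2 * m) := by
    have h := Complex.isPrimitiveRoot_exp (2 * m) (by omega)
    have heq : (2 * (Real.pi : ℂ) * Complex.I / ((2 * m : ℕ) : ℂ))
        = (Real.pi : ℂ) * Complex.I / m := by
      push_cast
      field_simp
    rwa [heq] at h
  have hz2 : IsPrimitiveRoot (z ^ 2) m := hzp.pow (by omega) (by ring)
  have hz0 : z ≠ 0 := Complex.exp_ne_zero _
  have hz20 : z ^ 2 ≠ 0 := pow_ne_zero 2 hz0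
  have hne1 : ∀ k ∈ Finset.Ioo 0 (2 * m), (1 : ℂ) - z ^ (-(k : ℤ)) ≠ 0 := by
    intro k hk
    simp only [Finset.mem_Ioo] at hk
    rw [sub_ne_zero, zpow_neg, zpow_natCast]
    intro h
    exact hzp.pow_ne_one_of_pos_of_lt hk.1.ne' hk.2 (by
      rw [← inv_inv (z ^ k), ← h]; simp)
  have hne2 : ∀ k ∈ Finset.Ioo 0 m, (1 : ℂ) - (z ^ 2) ^ (-(k : ℤ)) ≠ 0 := by
    intro k hk
    simp only [Finset.mem_Ioo] at hk
    rw [sub_ne_zero, zpow_neg, zpow_natCast]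
    intro h
    exact hz2.pow_ne_one_of_pos_of_lt hk.1.ne' hk.2 (by
      rw [← inv_inv ((z ^ 2) ^ k), ← h]; simp)
  have hpow2 : ∀ c : ℤ, (z ^ 2) ^ c = z ^ (2 * c) := by
    intro c
    rw [← zpow_natCast z 2, ← zpow_mul]
    norm_num
  have key : ∀ a : ℕ, a < 2 * m →
      ((∑ k ∈ Finset.Ioo 0 (2 * m), z ^ ((k : ℤ) * (a : ℤ)) / (1 - z ^ (-(k : ℤ))))
        - ∑ k ∈ Finset.Ioo 0 m, (z ^ 2) ^ ((k : ℤ) * (a : ℤ)) / (1 - (z ^ 2) ^ (-(k : ℤ))))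
      = if (a : ℤ) ≤ (m : ℤ) - 1 then (m : ℂ) / 2 else -((m : ℂ) / 2) := by
    intro a
    induction a with
    | zero =>
      intro _
      simp only [Nat.cast_zero, mul_zero, zpow_zero]
      rw [half_sum _ (by omega) _ hzp, half_sum _ hm _ hz2]
      rw [if_pos (by omega : (0 : ℤ) ≤ (m : ℤ) - 1)]
      push_cast
      ring
    | succ a ih =>
      intro ha
      have IH := ih (by omega)
      have hcast : ((a + 1 : ℕ) : ℤ) = (a : ℤ) + 1 := by push_cast; ring
      simp only [hcast]
      rw [T_step (2 * m) z hz0 hne1 a, T_step m (z ^ 2) hz20 hne2 a]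
      rw [geom_Ioo (2 * m) (by omega) z hzp ((a : ℤ) + 1),
        geom_Ioo m hm (z ^ 2) hz2 ((a : ℤ) + 1)]
      have hd1 : ¬ (((2 * m : ℕ) : ℤ) ∣ ((a : ℤ) + 1)) := by
        intro h
        have := Int.le_of_dvd (by omega) h
        push_cast at this
        omega
      rw [if_neg hd1]
      by_cases hc : a + 1 = m
      · have hd2 : ((m : ℕ) : ℤ) ∣ ((a : ℤ) + 1) := ⟨1, by push_cast; omega⟩
        rw [if_pos hd2]
        rw [if_pos (by omega : (a : ℤ) ≤ (m : ℤ) - 1)] at IH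
        rw [if_neg (by omega : ¬ ((a : ℤ) + 1 ≤ (m : ℤ) - 1))]
        linear_combination IH
      · have hd2 : ¬ (((m : ℕ) : ℤ) ∣ ((a : ℤ) + 1)) := by
          rw [show (a : ℤ) + 1 = ((a + 1 : ℕ) : ℤ) by push_cast; ring,
            Int.natCast_dvd_natCast]
          rintro ⟨c, hcc⟩
          have hc2 : c < 2 := by
            by_contra h2
            push_neg at h2
            have : m * 2 ≤ m * c := Nat.mul_le_mul_left m h2
            omega
          interval_cases c <;> omega
        rw [if_neg hd2]
        by_cases hle : (a : ℤ) + 1 ≤ (m : ℤ) - 1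
        · rw [if_pos hle]
          rw [if_pos (by omega)] at IH
          linear_combination IH
        · rw [if_neg hle]
          rw [if_neg (by omega : ¬ ((a : ℤ) ≤ (m : ℤ) - 1))] at IH
          linear_combination IH
  obtain ⟨a, rfl⟩ : ∃ a : ℕ, u = (a : ℤ) := ⟨u.toNat, (Int.toNat_of_nonneg hu0).symm⟩
  have ham : a < 2 * m := by omega
  have e1 : ∀ k : ℕ, z ^ (2 * (k : ℤ) * (a : ℤ)) = (z ^ 2) ^ ((k : ℤ) * (a : ℤ)) := by
    intro k
    rw [hpow2]
    congr 1
    ring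
  have e2 : ∀ k : ℕ, z ^ (-(2 * (k : ℤ))) = (z ^ 2) ^ (-(k : ℤ)) := by
    intro k
    rw [hpow2]
    congr 1
    ring
  simp_rw [e1, e2]
  rw [key a ham]
  by_cases h : (a : ℤ) ≤ (m : ℤ) - 1
  · rw [if_pos h, if_pos h]
    field_simp
  · rw [if_neg h, if_neg h]
    field_simp
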